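/- Let q = p^f with f even, V = F_q viewed as an F_p-vector space, and G = GL_1(q) ⋊ ⟨σ⟩ ≤ ΓL_1(q), where σ: x ↦ x^{q^{1/2}} is the q^{1/2}-power field automorphism. Then the proportion of elements of G fixing a nonzero vector of V equals 1/(2(q^{1/2}-1)) + 1/(2(q-1)). -/

import Mathlib

open Finset

private theorem aux_cyclic_count (α : Type*) [Group α] [Fintype α] [DecidableEq α] [IsCyclic α]
    {m : ℕ} (hm : 0 < m) (hdvd : m ∣ Fintype.card α) :
    (univ.filter (fun x : α => x ^ m = 1)).card = m := by
  obtain ⟨g, hg⟩ := IsCyclic.exists_generator (α := α)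
  have hog : orderOf g = Fintype.card α :=
    (orderOf_eq_card_of_forall_mem_zpowers hg).trans Nat.card_eq_fintype_card
  set N := Fintype.card α
  have ha : orderOf (g ^ (N / m)) = m := by
    rw [orderOf_pow, hog, Nat.gcd_eq_right (Nat.div_dvd_of_dvd hdvd),
      Nat.div_div_self hdvd (Fintype.card_pos).ne']
  refine le_antisymm (by simpa using IsCyclic.card_pow_eq_one_le hm) ?_
  have h1 : Fintype.card (Subgroup.zpowers (g ^ (N / m))) =
      (univ.filter (fun x => x ∈ Subgroup.zpowers (g ^ (N / m)))).card :=
    Fintype.card_subtype _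
  calc m = (univ.filter (fun x => x ∈ Subgroup.zpowers (g ^ (N / m)))).card := by
          rw [← h1, Fintype.card_zpowers, ha]
    _ ≤ _ := by
          apply Finset.card_le_card
          intro x hx
          simp only [mem_filter, mem_univ, true_and, Subgroup.mem_zpowers_iff] at hx ⊢
          obtain ⟨k, rfl⟩ := hx
          have hone : (g ^ (N / m)) ^ m = 1 := by
            have h2 := pow_orderOf_eq_one (g ^ (N / m)); rwa [ha] at h2
          rw [← zpow_natCast, ← zpow_mul, mul_comm, zpow_mul, zpow_natCast, hone, one_zpow]

private theorem aux_image_mul_ker (G : Type*) [Group G] [Fintype G] [DecidableEq G]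
    (f : G →* G) :
    (univ.image f).card * (univ.filter fun x => f x = 1).card = Fintype.card G := by
  have h1 : Nat.card G = Nat.card (G ⧸ f.ker) * Nat.card f.ker :=
    Subgroup.card_eq_card_quotient_mul_card_subgroup f.ker
  have h2 : Nat.card (G ⧸ f.ker) = Nat.card f.range :=
    Nat.card_congr (QuotientGroup.quotientKerEquivRange f).toEquiv
  have h3 : Nat.card f.range = (univ.image f).card := by
    have : (f.range : Set G) = (↑(univ.image f) : Set G) := by
      ext x
      simp [MonoidHom.mem_range, eq_comm]
    rw [← SetLike.coe_sort_coe, this, Nat.card_coe_set_eq, Set.ncard_coe_finset]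
  have h4 : Nat.card f.ker = (univ.filter fun x => f x = 1).card := by
    have : (f.ker : Set G) = (↑(univ.filter fun x => f x = 1) : Set G) := by
      ext x
      simp [MonoidHom.mem_ker]
    rw [← SetLike.coe_sort_coe, this, Nat.card_coe_set_eq, Set.ncard_coe_finset]
  rw [← Nat.card_eq_fintype_card, h1, h2, h3, h4]

/-- let `q = p^{2e}` and `G = GL_1(q) ⋊ ⟨σ⟩` where `σ : x ↦ x^{p^e}` is the
`√q`-power automorphism, acting on `V = F_q` by `v ↦ c · v^{(p^e)^k}`. The proportion of
elements of `G` fixing a nonzero vector equals `1/(2(√q - 1)) + 1/(2(q - 1))`. -/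
theorem stmt_16 (F : Type*) [Field F] [Fintype F] [DecidableEq F]
    (p e : ℕ) (hp : p.Prime) (he : 1 ≤ e) (hcard : Fintype.card F = p ^ (2 * e)) :
    ((univ.filter (fun x : Fˣ × Bool =>
        ∃ v : Fˣ, (if x.2 then x.1 * v ^ (p ^ e) else x.1 * v) = v)).card : ℝ) /
      (2 * ((Fintype.card F : ℝ) - 1)) =
      1 / (2 * ((p : ℝ) ^ e - 1)) + 1 / (2 * ((p : ℝ) ^ (2 * e) - 1)) := by
  have hd1 : 1 < p ^ e := Nat.one_lt_pow (by omega) hp.one_lt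
  set d := p ^ e with hd
  set m := d - 1 with hm
  have hm0 : 0 < m := by omega
  have hNcard : Fintype.card Fˣ = p ^ (2 * e) - 1 := by
    rw [Fintype.card_units, hcard]
  have hq : p ^ (2 * e) = d * d := by
    rw [hd, ← pow_add]; ring_nf
  have hmd : m ∣ Fintype.card Fˣ := by
    rw [hNcard, hq]
    have h := Nat.sub_dvd_pow_sub_pow d 1 2
    simpa [pow_two] using h
  -- the monoid hom `v ↦ (v ^ m)⁻¹`
  set φ : Fˣ →* Fˣ := (invMonoidHom).comp (powMonoidHom m) with hφ
  have hφ_apply : ∀ v : Fˣ, φ v = (v ^ m)⁻¹ := fun v => rfl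
  -- count of the Frobenius coset part
  have hT : (univ.filter fun c : Fˣ => ∃ v : Fˣ, c * v ^ (p ^ e) = v) = univ.image φ := by
    ext c
    simp only [mem_filter, mem_univ, true_and, mem_image, hφ_apply]
    constructor
    · rintro ⟨v, hv⟩
      refine ⟨v, ?_⟩
      have hvd : v ^ d = v ^ m * v := by
        rw [← pow_succ]
        congr 1
        omega
      rw [← hd, hvd, ← mul_assoc] at hv
      have : c * v ^ m = 1 := mul_right_cancel (by rwa [one_mul])
      exact (eq_inv_of_mul_eq_one_left this).symm
    · rintro ⟨v, rfl⟩
      refine ⟨v, ?_⟩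
      have hvd : v ^ d = v ^ m * v := by
        rw [← pow_succ]; congr 1; omega
      rw [← hd, hvd, ← mul_assoc, inv_mul_cancel, one_mul]
  have hker : (univ.filter fun x : Fˣ => φ x = 1).card = m := by
    have : (univ.filter fun x : Fˣ => φ x = 1) = (univ.filter fun x : Fˣ => x ^ m = 1) := by
      ext x
      simp [hφ_apply, inv_eq_one]
    rw [this]
    exact aux_cyclic_count Fˣ hm0 hmd
  have himg : (univ.image φ).card = d + 1 := by
    have h := aux_image_mul_ker Fˣ φ
    rw [hker, hNcard, hq] at h
    have hfac : d * d - 1 = (d + 1) * m := by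
      rw [hm]
      calc d * d - 1 = d ^ 2 - 1 ^ 2 := by rw [pow_two, one_pow]
        _ = (d + 1) * (d - 1) := Nat.sq_sub_sq d 1
    rw [hfac] at h
    exact Nat.eq_of_mul_eq_mul_right hm0 h
  -- split the big filter along the Bool coordinate
  have hsplit : (univ.filter (fun x : Fˣ × Bool =>
        ∃ v : Fˣ, (if x.2 then x.1 * v ^ (p ^ e) else x.1 * v) = v)).card
      = (univ.filter fun c : Fˣ => ∃ v : Fˣ, c * v = v).card
        + (univ.filter fun c : Fˣ => ∃ v : Fˣ, c * v ^ (p ^ e) = v).card := by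
    rw [← Finset.card_map ⟨fun c : Fˣ => (c, false), fun a b h => by simpa using h⟩,
      ← Finset.card_map ⟨fun c : Fˣ => (c, true), fun a b h => by simpa using h⟩,
      ← Finset.card_union_of_disjoint]
    · congr 1
      ext ⟨c, b⟩
      cases b
      · simp only [mem_filter, mem_univ, true_and, mem_union, mem_map,
          Function.Embedding.coeFn_mk, Prod.mk.injEq]
        simp [DFunLike.coe]
        exact eq_comm
      · simp [DFunLike.coe]
    · simp [Finset.disjoint_left, DFunLike.coe]
  have hone : (univ.filter fun c : Fˣ => ∃ v : Fˣ, c * v = v) = {1} := by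
    ext c
    simp [mul_eq_right]
  have hcount : (univ.filter (fun x : Fˣ × Bool =>
        ∃ v : Fˣ, (if x.2 then x.1 * v ^ (p ^ e) else x.1 * v) = v)).card = d + 2 := by
    rw [hsplit, hone, hT, himg, card_singleton]; omega
  rw [hcount, hcard]
  have hp1 : (1 : ℝ) < (p : ℝ) ^ e := by
    have : (1 : ℝ) < (p : ℝ) := by exact_mod_cast hp.one_lt
    exact one_lt_pow₀ this (by omega)
  have hq1 : (1 : ℝ) < (p : ℝ) ^ (2 * e) := by
    have : (1 : ℝ) < (p : ℝ) := by exact_mod_cast hp.one_lt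
    exact one_lt_pow₀ this (by positivity)
  have h2 : ((p : ℝ) ^ (2 * e)) = (p : ℝ) ^ e * (p : ℝ) ^ e := by
    rw [← pow_add]; ring_nf
  have hd2 : ((d : ℝ)) = (p : ℝ) ^ e := by rw [hd]; push_cast; ring
  have hc2 : ((p ^ (2 * e) : ℕ) : ℝ) = (p : ℝ) ^ (2 * e) := by push_cast; ring
  rw [hc2]
  have hne1 : (p : ℝ) ^ e - 1 ≠ 0 := by linarith
  have hne2 : (p : ℝ) ^ (2 * e) - 1 ≠ 0 := by linarith
  push_cast [hd2]
  field_simp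
  rw [h2]
  ring
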